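/- Fix an integer k ≥ 1. There exists C < ∞ such that for every λ ∈ (0,1) there exist real constants c₁, c₂ with |c₁ − λ^{−1/2}| ≤ C and |c₂ − λ^{−1/2}| ≤ C such that the function h : ℕ → ℝ defined by h(x) = ½ (c₁ γ^{k−x} + c₂ γ^{x−k}) for 0 ≤ x < k and h(x) = ½ (c₁ + c₂) γ^{x−k} for x ≥ k satisfies λ h(x) − (𝒮h)(x) = 1 if x = k and λ h(x) − (𝒮h)(x) = 0 for all other x ∈ ℕ; that is, h solves (λ − 𝒮) h = δ_k. Here γ = ((λ+2) − √(λ² + 4λ))/2. -/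

import Mathlib

/-- The generator of the symmetric nearest-neighbor random walk on `ℕ` reflected at `0`. -/
noncomputable def walkGen (f : ℕ → ℝ) : ℕ → ℝ :=
  fun x => if x = 0 then f 1 - f 0 else f (x + 1) + f (x - 1) - 2 * f x

/-- `γ = ((λ+2) - √(λ²+4λ))/2`, the root in `(0,1)` of `γ² - (λ+2)γ + 1 = 0`. -/
noncomputable def gam (lam : ℝ) : ℝ :=
  ((lam + 2) - Real.sqrt (lam ^ 2 + 4 * lam)) / 2

private lemma aux_bdry (lam γ c₁ c₂ u : ℝ) (hγne : γ ≠ 0) (hu : u ≠ 0)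
    (hq : γ^2-(lam+2)*γ+1 = 0) (hc2u : c₂ = c₁*u^2*γ) :
    lam * ((c₁*u + c₂*u⁻¹)/2) - ((c₁*(u/γ) + c₂*(γ/u))/2 - (c₁*u + c₂*u⁻¹)/2) = 0 := by
  subst hc2u
  field_simp
  linear_combination (-c₁*u*(1+γ))*hq

private lemma aux_rec (γ lam c₁ c₂ : ℝ) (hγ : γ ≠ 0)
    (hq : γ^2 - (lam+2)*γ + 1 = 0) (n : ℤ) :
    lam * ((c₁ * γ^(-n) + c₂ * γ^n)/2) -
      ((c₁ * γ^(-(n+1)) + c₂ * γ^(n+1))/2 + (c₁ * γ^(-(n-1)) + c₂ * γ^(n-1))/2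
        - 2 * ((c₁ * γ^(-n) + c₂ * γ^n)/2)) = 0 := by
  have hu : γ ^ n ≠ 0 := zpow_ne_zero _ hγ
  rw [show -(n+1) = -n + (-1) by ring, show -(n-1) = -n + 1 by ring,
     show n - 1 = n + (-1) by ring,
     zpow_add₀ hγ, zpow_add₀ hγ, zpow_add₀ hγ, zpow_add₀ hγ]
  simp only [zpow_one, zpow_neg_one, zpow_neg]
  field_simp
  linear_combination (-(c₁ + (γ^n)^2*c₂)) * hq

set_option maxHeartbeats 1600000 in
/-- For each `k ≥ 1` there is `C < ∞` such that for every `λ ∈ (0,1)` there are constants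
`c₁, c₂` with `|cᵢ - λ^{-1/2}| ≤ C` for which the function
`h(x) = ½(c₁ γ^{k-x} + c₂ γ^{x-k})` for `x < k`, `h(x) = ½(c₁+c₂) γ^{x-k}` for `x ≥ k`,
solves the resolvent equation `(λ - 𝒮)h = δ_k`. -/
theorem resolvent_delta_k (k : ℕ) (hk : 1 ≤ k) :
    ∃ C : ℝ, ∀ lam : ℝ, lam ∈ Set.Ioo (0 : ℝ) 1 →
      ∃ c₁ c₂ : ℝ, |c₁ - lam ^ (-(1 / 2) : ℝ)| ≤ C ∧ |c₂ - lam ^ (-(1 / 2) : ℝ)| ≤ C ∧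
        ∀ h : ℕ → ℝ,
          (∀ x : ℕ, h x =
            if x < k then
              (c₁ * gam lam ^ ((k : ℤ) - (x : ℤ)) + c₂ * gam lam ^ ((x : ℤ) - (k : ℤ))) / 2
            else ((c₁ + c₂) / 2) * gam lam ^ ((x : ℤ) - (k : ℤ))) →
          lam * h k - walkGen h k = 1 ∧
            ∀ x : ℕ, x ≠ k → lam * h x - walkGen h x = 0 := by
  refine ⟨2*(k:ℝ)+2, ?_⟩
  rintro lam ⟨hl0, hl1⟩
  have hdisc : (0:ℝ) < lam^2 + 4*lam := by nlinarith
  obtain ⟨s, hs⟩ : ∃ y : ℝ, y = Real.sqrt (lam^2 + 4*lam) := ⟨_, rfl⟩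
  obtain ⟨γ, hγg⟩ : ∃ y : ℝ, y = gam lam := ⟨_, rfl⟩
  rw [← hγg]
  have hsq : s^2 = lam^2 + 4*lam := by rw [hs]; exact Real.sq_sqrt hdisc.le
  have hs0 : 0 < s := by rw [hs]; exact Real.sqrt_pos.mpr hdisc
  have hγeq : γ = (lam+2-s)/2 := by rw [hγg, gam, hs]
  have hγ0 : 0 < γ := by rw [hγeq]; nlinarith
  have hγ1 : γ < 1 := by rw [hγeq]; nlinarith
  have hγne : γ ≠ 0 := ne_of_gt hγ0
  have hq : γ^2 - (lam+2)*γ + 1 = 0 := by rw [hγeq]; linear_combination hsq/4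
  obtain ⟨t, ht⟩ : ∃ y : ℝ, y = Real.sqrt lam := ⟨_, rfl⟩
  have htq : t^2 = lam := by rw [ht]; exact Real.sq_sqrt hl0.le
  have ht0 : 0 < t := by rw [ht]; exact Real.sqrt_pos.mpr hl0
  have ht1 : t < 1 := by nlinarith
  have hrpow : lam ^ (-(1 / 2) : ℝ) = t⁻¹ := by
    rw [Real.rpow_neg hl0.le, ht, Real.sqrt_eq_rpow]
  obtain ⟨c₁, hc1⟩ : ∃ y : ℝ, y = 2/s := ⟨_, rfl⟩
  obtain ⟨c₂, hc2⟩ : ∃ y : ℝ, y = c₁ * γ^(2*k+1) := ⟨_, rfl⟩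
  have hts : 2*t ≤ s := by nlinarith
  have hc1pos : 0 < c₁ := by rw [hc1]; exact div_pos two_pos hs0
  have hb1 : |c₁ - t⁻¹| ≤ 1 := by
    have e1 : (c₁ - t⁻¹) * (s*t) = 2*t - s := by rw [hc1]; field_simp
    have e2 : s - 2*t ≤ t*s := by nlinarith
    have hst : 0 < s*t := mul_pos hs0 ht0
    have hA : c₁ - t⁻¹ ≤ 0 := by
      by_contra hcon
      push_neg at hcon
      nlinarith [e1, hst, hts, mul_pos hcon hst]
    have hB : t⁻¹ - c₁ ≤ 1 := by
      by_contra hcon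
      push_neg at hcon
      nlinarith [e1, e2, hst, mul_lt_mul_of_pos_right hcon hst]
    rw [abs_le]
    constructor <;> linarith
  have hγpow1 : γ^(2*k+1) ≤ 1 := pow_le_one₀ hγ0.le hγ1.le
  have hγpowpos : 0 < γ^(2*k+1) := pow_pos hγ0 _
  have hbern : 1 - γ^(2*k+1) ≤ (2*(k:ℝ)+1)*(1-γ) := by
    have hb := one_add_mul_le_pow (a := γ-1) (by linarith) (2*k+1)
    have h' : (1 + (γ-1)) = γ := by ring
    rw [h'] at hb
    push_cast at hb ⊢
    linarith only [hb]
  have hc1γ : c₁ * (1-γ) ≤ 1 := by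
    have e : (c₁*(1-γ))*s = s - lam := by rw [hc1, hγeq]; field_simp; ring
    nlinarith only [e, hs0, hl0]
  have hc2c1 : |c₂ - c₁| ≤ 2*(k:ℝ)+1 := by
    rw [hc2, abs_le]
    constructor
    · linarith only [mul_le_mul_of_nonneg_left hbern hc1pos.le,
        mul_le_mul_of_nonneg_left hc1γ (by positivity : (0:ℝ) ≤ 2*(k:ℝ)+1)]
    · linarith only [mul_le_of_le_one_right hc1pos.le hγpow1, Nat.cast_nonneg (α := ℝ) k]
  refine ⟨c₁, c₂, by rw [hrpow]; linarith only [hb1, abs_nonneg (c₁ - t⁻¹), Nat.cast_nonneg (α := ℝ) k], ?_, ?_⟩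
  · rw [hrpow]
    calc |c₂ - t⁻¹| ≤ |c₂ - c₁| + |c₁ - t⁻¹| := abs_sub_le _ _ _
    _ ≤ 2*(k:ℝ)+2 := by linarith only [hc2c1, hb1]
  intro h hh
  have hle : ∀ x : ℕ, x ≤ k → h x = (c₁ * γ^((k:ℤ)-(x:ℤ)) + c₂ * γ^((x:ℤ)-(k:ℤ)))/2 := by
    intro x hx
    rcases lt_or_eq_of_le hx with hlt | rfl
    · rw [hh x, if_pos hlt]
    · rw [hh x, if_neg (lt_irrefl _)]; simp
  have hge : ∀ x : ℕ, k ≤ x → h x = ((c₁+c₂)/2) * γ^((x:ℤ)-(k:ℤ)) := fun x hx => by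
    rw [hh x, if_neg (not_lt.mpr hx)]
  have hk0 : k ≠ 0 := by omega
  constructor
  · -- main equation at x = k
    have e1 : h k = (c₁+c₂)/2 := by rw [hge k le_rfl]; simp
    have e2 : h (k+1) = ((c₁+c₂)/2) * γ := by
      rw [hge _ (by omega), show ((k+1:ℕ):ℤ) - (k:ℤ) = 1 by push_cast; ring, zpow_one]
    have e3 : h (k-1) = (c₁ * γ + c₂ * γ⁻¹)/2 := by
      rw [hle _ (by omega), show (k:ℤ) - ((k-1:ℕ):ℤ) = 1 by omega,
        show ((k-1:ℕ):ℤ) - (k:ℤ) = -1 by omega, zpow_one, zpow_neg_one]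
    have hsγ : 1 - γ^2 = s*γ := by rw [hγeq]; linear_combination hsq/4
    have hkey : c₁ * (1 - γ^2) = 2*γ := by rw [hc1, hsγ]; field_simp
    simp only [walkGen, if_neg hk0]
    rw [e1, e2, e3]
    field_simp
    linear_combination (-(c₁+c₂))*hq + hkey
  · intro x hx
    rcases Nat.lt_or_ge x k with hxk | hxk
    · rcases Nat.eq_zero_or_pos x with rfl | hx1
      · -- x = 0
        have hu : γ^(k:ℤ) ≠ 0 := zpow_ne_zero _ hγne
        have e0 : h 0 = (c₁ * γ^(k:ℤ) + c₂ * (γ^(k:ℤ))⁻¹)/2 := by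
          rw [hle 0 (by omega)]
          norm_num [zpow_neg]
        have e1 : h 1 = (c₁ * (γ^(k:ℤ)/γ) + c₂ * (γ/γ^(k:ℤ)))/2 := by
          rw [hle 1 hk,
            show (k:ℤ) - ((1:ℕ):ℤ) = (k:ℤ) - 1 by norm_num,
            show ((1:ℕ):ℤ) - (k:ℤ) = 1 - (k:ℤ) by norm_num,
            zpow_sub₀ hγne, zpow_sub₀ hγne, zpow_one]
        have hc2u : c₂ = c₁ * (γ^(k:ℤ))^2 * γ := by
          rw [hc2, ← zpow_natCast γ (2*k+1),
            show ((2*k+1:ℕ):ℤ) = (k:ℤ)+((k:ℤ)+1) by push_cast; ring,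
            zpow_add₀ hγne, zpow_add₀ hγne, zpow_one]
          ring
        simp only [walkGen, if_pos rfl]
        rw [e0, e1]
        exact aux_bdry lam γ c₁ c₂ (γ^(k:ℤ)) hγne hu hq hc2u
      · -- 1 ≤ x < k : interior
        have f0 : h x = (c₁ * γ^(-((x:ℤ)-(k:ℤ))) + c₂ * γ^((x:ℤ)-(k:ℤ)))/2 := by
          rw [hle x hxk.le]; ring_nf
        have f1 : h (x+1) = (c₁ * γ^(-(((x:ℤ)-(k:ℤ))+1)) + c₂ * γ^(((x:ℤ)-(k:ℤ))+1))/2 := by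
          rw [hle (x+1) (by omega), show (k:ℤ) - ((x+1:ℕ):ℤ) = -(((x:ℤ)-(k:ℤ))+1) by push_cast; ring,
            show ((x+1:ℕ):ℤ) - (k:ℤ) = ((x:ℤ)-(k:ℤ))+1 by push_cast; ring]
        have f2 : h (x-1) = (c₁ * γ^(-(((x:ℤ)-(k:ℤ))-1)) + c₂ * γ^(((x:ℤ)-(k:ℤ))-1))/2 := by
          rw [hle (x-1) (by omega), show (k:ℤ) - ((x-1:ℕ):ℤ) = -(((x:ℤ)-(k:ℤ))-1) by omega,
            show ((x-1:ℕ):ℤ) - (k:ℤ) = ((x:ℤ)-(k:ℤ))-1 by omega]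
        simp only [walkGen, if_neg (by omega : x ≠ 0)]
        rw [f0, f1, f2]
        exact aux_rec γ lam c₁ c₂ hγne hq ((x:ℤ)-(k:ℤ))
    · -- x > k
      have hxk' : k < x := by omega
      have f0 : h x = (0 * γ^(-((x:ℤ)-(k:ℤ))) + (c₁+c₂) * γ^((x:ℤ)-(k:ℤ)))/2 := by
        rw [hge x hxk]; ring
      have f1 : h (x+1) = (0 * γ^(-(((x:ℤ)-(k:ℤ))+1)) + (c₁+c₂) * γ^(((x:ℤ)-(k:ℤ))+1))/2 := by
        rw [hge (x+1) (by omega), show ((x+1:ℕ):ℤ) - (k:ℤ) = ((x:ℤ)-(k:ℤ))+1 by push_cast; ring]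
        ring
      have f2 : h (x-1) = (0 * γ^(-(((x:ℤ)-(k:ℤ))-1)) + (c₁+c₂) * γ^(((x:ℤ)-(k:ℤ))-1))/2 := by
        rw [hge (x-1) (by omega), show ((x-1:ℕ):ℤ) - (k:ℤ) = ((x:ℤ)-(k:ℤ))-1 by omega]
        ring
      simp only [walkGen, if_neg (by omega : x ≠ 0)]
      rw [f0, f1, f2]
      exact aux_rec γ lam 0 (c₁+c₂) hγne hq ((x:ℤ)-(k:ℤ))
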